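/- Let Λ be a right noetherian ring such that every nonzero finitely generated right Λ-module has a simple submodule. Then Λ is right artinian. -/

import Mathlib

universe u

set_option synthInstance.maxHeartbeats 1000000 in
set_option maxHeartbeats 2000000 in
theorem isArtinian_of_simple_submodules
    (Λ : Type u) [Ring Λ] [IsNoetherianRing Λᵐᵒᵖ]
    (h : ∀ (M : Type u) [AddCommGroup M] [Module Λᵐᵒᵖ M], Module.Finite Λᵐᵒᵖ M →
      Nontrivial M → ∃ N : Submodule Λᵐᵒᵖ M, IsSimpleModule Λᵐᵒᵖ N) :
    IsArtinianRing Λᵐᵒᵖ := by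
  obtain ⟨I, hIS, hImax⟩ :=
    set_has_maximal_iff_noetherian.mpr (inferInstance : IsNoetherian Λᵐᵒᵖ Λᵐᵒᵖ)
      {I : Submodule Λᵐᵒᵖ Λᵐᵒᵖ | IsArtinian Λᵐᵒᵖ I}
      ⟨⊥, by simp only [Set.mem_setOf_eq]; infer_instance⟩
  simp only [Set.mem_setOf_eq] at hIS hImax
  have hItop : I = ⊤ := by
    by_contra hne
    have hlt : I < ⊤ := lt_top_iff_ne_top.mpr hne
    have hnt : Nontrivial (Λᵐᵒᵖ ⧸ I) := Submodule.Quotient.nontrivial_iff.mpr hlt.ne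
    obtain ⟨N, hN⟩ := h (Λᵐᵒᵖ ⧸ I) inferInstance hnt
    set N' : Submodule Λᵐᵒᵖ Λᵐᵒᵖ := N.comap I.mkQ with hN'def
    have hle : I ≤ N' := fun x hx => by
      simp [hN'def, Submodule.mem_comap, (Submodule.Quotient.mk_eq_zero I).mpr hx]
    haveI hsimpleArt : IsArtinian Λᵐᵒᵖ N := by
      have : IsSimpleOrder (Submodule Λᵐᵒᵖ N) := hN.toIsSimpleOrder
      exact open IsSimpleOrder in ⟨Finite.wellFounded_of_trans_of_irrefl _⟩
    haveI hIArt : IsArtinian Λᵐᵒᵖ I := hIS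
    have hNA : IsArtinian Λᵐᵒᵖ N' := by
      rw [isArtinian_iff_submodule_quotient (I.comap N'.subtype)]
      constructor
      · exact isArtinian_of_linearEquiv (R := Λᵐᵒᵖ) (M := I) (P := I.comap N'.subtype)
          (Submodule.comapSubtypeEquivOfLe hle).symm
      let f : N' →ₗ[Λᵐᵒᵖ] Λᵐᵒᵖ ⧸ I := I.mkQ.comp N'.subtype
      have hker : LinearMap.ker f = I.comap N'.subtype := by
        ext x
        simp [f, Submodule.Quotient.mk_eq_zero]
      have hrange : LinearMap.range f = N := by
        rw [show LinearMap.range f = Submodule.map I.mkQ (LinearMap.range N'.subtype) from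
          LinearMap.range_comp _ _, Submodule.range_subtype, hN'def,
          Submodule.map_comap_eq_of_surjective I.mkQ_surjective]
      have e : (N' ⧸ I.comap N'.subtype) ≃ₗ[Λᵐᵒᵖ] N := by
        rw [← hker, ← hrange]
        exact f.quotKerEquivRange
      exact isArtinian_of_linearEquiv e.symm
    have hlt' : I < N' := by
      have : Nontrivial N := IsSimpleModule.nontrivial Λᵐᵒᵖ N
      obtain ⟨x, hx⟩ := exists_ne (0 : N)
      obtain ⟨y, hy⟩ := I.mkQ_surjective (x : Λᵐᵒᵖ ⧸ I)
      refine lt_of_le_of_ne hle fun hEq => hx ?_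
      have hyN' : y ∈ N' := by
        simp [hN'def, Submodule.mem_comap, hy, x.2]
      rw [← hEq] at hyN'
      have : (x : Λᵐᵒᵖ ⧸ I) = 0 := by
        rw [← hy, Submodule.mkQ_apply, Submodule.Quotient.mk_eq_zero]; exact hyN'
      exact Subtype.ext this
    exact hImax N' hNA hlt'
  have : IsArtinian Λᵐᵒᵖ I := hIS
  rw [hItop] at this
  exact isArtinian_of_linearEquiv (Submodule.topEquiv (R := Λᵐᵒᵖ) (M := Λᵐᵒᵖ))
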